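/- Let k ≥ 1 be an integer. There exists a constant C > 0, depending only on k, such that for every real R ≥ 1, every ξ ∈ ℝ^k with ‖ξ‖ ≥ 1, and every δ > 0, the Lebesgue measure of the set {(λ₀, …, λ_k) ∈ ((−2πR, 2πR)^k)^{k+1} : |e^{i⟨λ_ℓ, ξ⟩} − 1| ≤ δ for all ℓ ∈ {0, …, k}} is at most C·R^{k(k+1)}·δ^{k+1}. -/

import Mathlib

open MeasureTheory RealInnerProductSpace Real
open scoped ENNReal

lemma norm_exp_I_sub_one (θ : ℝ) :
    ‖Complex.exp (Complex.I * θ) - 1‖ = 2 * |Real.sin (θ/2)| := by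
  rw [mul_comm, Complex.exp_mul_I]
  have : Complex.cos θ + Complex.sin θ * Complex.I - 1
      = Complex.mk (Real.cos θ - 1) (Real.sin θ) := by
    apply Complex.ext <;> simp [Complex.cos_ofReal_re, Complex.sin_ofReal_re]
  rw [this, Complex.norm_def, Complex.normSq_mk]
  have h2 : Real.cos θ = 2 * Real.cos (θ/2)^2 - 1 := by
    rw [← Real.cos_two_mul]; ring_nf
  have h1 : (Real.cos θ - 1) * (Real.cos θ - 1) + Real.sin θ * Real.sin θ
      = 4 * Real.sin (θ/2)^2 := by
    nlinarith [Real.sin_sq_add_cos_sq (θ/2), Real.sin_sq_add_cos_sq θ]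
  rw [h1, show (4:ℝ) * Real.sin (θ/2)^2 = (2*|Real.sin (θ/2)|)^2 by rw [mul_pow, sq_abs]; ring]
  exact Real.sqrt_sq (by positivity)

lemma near_lattice {θ δ : ℝ} (h : ‖Complex.exp (Complex.I * θ) - 1‖ ≤ δ) :
    ∃ n : ℤ, |θ - 2*π*n| ≤ min (π*δ/2) π := by
  refine ⟨round (θ/(2*π)), ?_⟩
  set n : ℤ := round (θ/(2*π)) with hn
  have hπ := Real.pi_pos
  have hx : |θ - 2*π*n| ≤ π := by
    have h0 := abs_sub_round (θ/(2*π))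
    have he : θ - 2*π*n = (2*π) * (θ/(2*π) - n) := by field_simp
    rw [he, abs_mul, abs_of_pos (show (0:ℝ) < 2*π by linarith)]
    nlinarith
  refine le_min ?_ hx
  have hper : Complex.exp (Complex.I * θ) = Complex.exp (Complex.I * ((θ - 2*π*n : ℝ) : ℂ)) := by
    rw [show (Complex.I * ((θ - 2*π*n : ℝ) : ℂ)) = Complex.I * (θ:ℝ) + ((-n : ℤ) : ℂ) * (2*π*Complex.I) by
      push_cast; ring, Complex.exp_add, Complex.exp_int_mul_two_pi_mul_I, mul_one]
  rw [hper, norm_exp_I_sub_one] at h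
  set x := θ - 2*π*n with hxdef
  have hs : (2/π) * |x/2| ≤ |Real.sin (x/2)| := by
    rcases abs_le.1 hx with ⟨h1, h2⟩
    rcases le_or_gt 0 x with hx0 | hx0
    · rw [abs_of_nonneg (by linarith : (0:ℝ) ≤ x/2),
        abs_of_nonneg (Real.sin_nonneg_of_nonneg_of_le_pi (by linarith) (by linarith))]
      exact Real.mul_le_sin (by linarith) (by linarith)
    · rw [abs_of_nonpos (by linarith : x/2 ≤ 0)]
      have h3 : 2/π * (-(x/2)) ≤ Real.sin (-(x/2)) :=
        Real.mul_le_sin (by linarith) (by linarith)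
      rw [Real.sin_neg] at h3
      calc 2/π * -(x/2) ≤ -Real.sin (x/2) := h3
        _ ≤ |Real.sin (x/2)| := neg_le_abs _
  have h2 : 2 * ((2/π) * |x/2|) ≤ δ := le_trans (by linarith) h
  have hax : |x/2| = |x|/2 := by rw [abs_div, abs_two]
  rw [hax] at h2
  have : (2/π) * |x| ≤ δ := by linarith
  rw [div_mul_eq_mul_div, div_le_iff₀ hπ] at this
  linarith

lemma vol_abs_le {a c : ℝ} (ε : ℝ) (ha : a ≠ 0) :
    volume {t : ℝ | |t*a + c| ≤ ε} ≤ ENNReal.ofReal (2*ε/|a|) := by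
  rcases ha.lt_or_gt with h | h
  · have : {t : ℝ | |t*a + c| ≤ ε} = Set.Icc ((ε-c)/a) ((-ε-c)/a) := by
      ext t
      simp only [Set.mem_setOf_eq, Set.mem_Icc, abs_le, div_le_iff_of_neg h, le_div_iff_of_neg h]
      constructor <;> rintro ⟨h1, h2⟩ <;> constructor <;> nlinarith
    rw [this, Real.volume_Icc, abs_of_neg h]
    apply ENNReal.ofReal_le_ofReal
    rw [div_sub_div_same, show -ε - c - (ε - c) = -(2*ε) by ring, neg_div, ← div_neg]
  · have : {t : ℝ | |t*a + c| ≤ ε} = Set.Icc ((-ε-c)/a) ((ε-c)/a) := by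
      ext t
      simp only [Set.mem_setOf_eq, Set.mem_Icc, abs_le, div_le_iff₀ h, le_div_iff₀ h]
      constructor <;> rintro ⟨h1, h2⟩ <;> constructor <;> nlinarith
    rw [this, Real.volume_Icc, abs_of_pos h]
    apply ENNReal.ofReal_le_ofReal
    rw [div_sub_div_same]
    apply le_of_eq; ring

lemma oneD {a b δ L : ℝ} (ha : a ≠ 0) (hδ : 0 < δ) (hL : 0 < L) :
    volume {t : ℝ | t ∈ Set.Ioo (-L) L ∧ ‖Complex.exp (Complex.I * ((t*a+b : ℝ) : ℂ)) - 1‖ ≤ δ}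
      ≤ ENNReal.ofReal ((L*|a|/π + 2) * (π*δ/|a|)) := by
  have hπ := Real.pi_pos
  set ε := min (π*δ/2) π with hε
  have hε0 : 0 < ε := lt_min (by positivity) hπ
  have hεπ : ε ≤ π := min_le_right _ _
  have hεδ : 2*ε ≤ π*δ := by
    have := min_le_left (π*δ/2) π
    linarith
  have hapos : 0 < |a| := abs_pos.2 ha
  set l : ℤ := ⌈(b - L*|a| - ε)/(2*π)⌉ with hl
  set u : ℤ := ⌊(b + L*|a| + ε)/(2*π)⌋ with hu
  set F : Finset ℤ := Finset.Icc l u with hF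
  have hcover : {t : ℝ | t ∈ Set.Ioo (-L) L ∧ ‖Complex.exp (Complex.I * ((t*a+b : ℝ) : ℂ)) - 1‖ ≤ δ}
      ⊆ ⋃ n ∈ F, {t : ℝ | |t*a + (b - 2*π*n)| ≤ ε} := by
    rintro t ⟨⟨ht1, ht2⟩, hexp⟩
    obtain ⟨n, hn⟩ := near_lattice hexp
    have hta : |t*a| ≤ L*|a| := by
      rw [abs_mul]
      apply mul_le_mul_of_nonneg_right _ (le_of_lt hapos)
      rw [abs_le]; constructor <;> linarith
    have hn' : |t*a + (b - 2*π*n)| ≤ ε := by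
      rw [show t*a + (b - 2*π*n) = t*a+b - 2*π*n by ring]; exact hn
    have habs := abs_le.1 hn'
    have habs2 := abs_le.1 hta
    have hnF : n ∈ F := by
      rw [hF, Finset.mem_Icc]
      constructor
      · rw [hl]
        apply Int.ceil_le.2
        rw [div_le_iff₀ (by linarith : (0:ℝ) < 2*π)]
        push_cast
        nlinarith [habs.1, habs2.1]
      · rw [hu]
        apply Int.le_floor.2
        rw [le_div_iff₀ (by linarith : (0:ℝ) < 2*π)]
        push_cast
        nlinarith [habs.2, habs2.2]
    exact Set.mem_biUnion hnF hn'
  calc volume {t : ℝ | t ∈ Set.Ioo (-L) L ∧ ‖Complex.exp (Complex.I * ((t*a+b : ℝ) : ℂ)) - 1‖ ≤ δ}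
      ≤ volume (⋃ n ∈ F, {t : ℝ | |t*a + (b - 2*π*n)| ≤ ε}) := measure_mono hcover
    _ ≤ ∑ n ∈ F, volume {t : ℝ | |t*a + (b - 2*π*n)| ≤ ε} := measure_biUnion_finset_le F _
    _ ≤ ∑ n ∈ F, ENNReal.ofReal (2*ε/|a|) := Finset.sum_le_sum fun n _ => vol_abs_le ε ha
    _ = (F.card : ℝ≥0∞) * ENNReal.ofReal (2*ε/|a|) := by
        rw [Finset.sum_const, nsmul_eq_mul]
    _ ≤ ENNReal.ofReal ((L*|a|/π + 2) * (π*δ/|a|)) := by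
        rw [← ENNReal.ofReal_natCast, ← ENNReal.ofReal_mul (by positivity)]
        apply ENNReal.ofReal_le_ofReal
        have hcard : (F.card : ℝ) ≤ L*|a|/π + 2 := by
          rw [hF, Int.card_Icc]
          by_cases hlu : l ≤ u
          · have h1 : ((u + 1 - l).toNat : ℝ) = ((u:ℝ) + 1 - l) := by
              have hnn : (0:ℤ) ≤ u + 1 - l := by omega
              exact_mod_cast congrArg (fun z : ℤ => (z:ℝ)) (Int.toNat_of_nonneg hnn)
            rw [h1]
            have h2 : (u:ℝ) * (2*π) ≤ b + L*|a| + ε := by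
              have := Int.floor_le ((b + L*|a| + ε)/(2*π))
              rw [le_div_iff₀ (by linarith : (0:ℝ) < 2*π)] at this
              exact this
            have h3 : b - L*|a| - ε ≤ (l:ℝ) * (2*π) := by
              have := Int.le_ceil ((b - L*|a| - ε)/(2*π))
              rw [div_le_iff₀ (by linarith : (0:ℝ) < 2*π)] at this
              exact this
            have key : ((u:ℝ) - l) ≤ (L*|a| + π)/π := by
              rw [le_div_iff₀ hπ]
              nlinarith
            have heq : (L*|a| + π)/π = L*|a|/π + 1 := by field_simp
            rw [heq] at key
            linarith
          · have hz : (u + 1 - l).toNat = 0 := by omega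
            rw [hz]
            push_cast
            positivity
        have h2ε : 2*ε/|a| ≤ π*δ/|a| := by gcongr
        apply mul_le_mul hcard h2ε (by positivity) (by positivity)

lemma dimk {m : ℕ} {R δ : ℝ} (hR : 1 ≤ R) (hδ : 0 < δ)
    (ξ : EuclideanSpace ℝ (Fin (m+1))) (hξ : 1 ≤ ‖ξ‖) :
    volume {x : EuclideanSpace ℝ (Fin (m+1)) |
        (∀ i, x i ∈ Set.Ioo (-(2*π*R)) (2*π*R)) ∧
        ‖Complex.exp (Complex.I * ((⟪x, ξ⟫ : ℝ) : ℂ)) - 1‖ ≤ δ}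
      ≤ ENNReal.ofReal ((2*π*(1+Real.sqrt (m+1)) * (4*π)^m) * R^(m+1) * δ) := by
  have hπ := Real.pi_pos
  have hL : (0:ℝ) < 2*π*R := by nlinarith
  -- find big coordinate
  obtain ⟨i₀, hi₀⟩ : ∃ i₀ : Fin (m+1), 1/Real.sqrt (m+1) ≤ |ξ i₀| := by
    by_contra hcon
    push_neg at hcon
    have hs : (0:ℝ) < Real.sqrt (m+1) := Real.sqrt_pos.2 (by positivity)
    have hsq : ∀ i : Fin (m+1), ‖ξ i‖^2 < 1/((m:ℝ)+1) := by
      intro i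
      have h2 : |ξ i| < 1/Real.sqrt (m+1) := hcon i
      have h4 : |ξ i|^2 < (1/Real.sqrt (m+1))^2 := by
        apply sq_lt_sq' _ h2
        have := abs_nonneg (ξ i); linarith
      have h5 : (1/Real.sqrt (m+1))^2 = 1/((m:ℝ)+1) := by
        rw [div_pow, one_pow, Real.sq_sqrt (by positivity : (0:ℝ) ≤ (m:ℝ)+1)]
      rw [Real.norm_eq_abs]
      rw [h5] at h4
      exact h4
    have hnorm : ‖ξ‖^2 < 1 := by
      rw [EuclideanSpace.norm_eq, Real.sq_sqrt (by positivity)]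
      calc ∑ i, ‖ξ i‖ ^ 2 < ∑ _i : Fin (m+1), 1/((m:ℝ)+1) := by
            apply Finset.sum_lt_sum_of_nonempty (Finset.univ_nonempty)
            intro i _
            exact hsq i
        _ = 1 := by
            rw [Finset.sum_const, Finset.card_univ, Fintype.card_fin, nsmul_eq_mul]
            push_cast; field_simp
    nlinarith
  set a := ξ i₀ with haa
  have hsm : (0:ℝ) < Real.sqrt (m+1) := Real.sqrt_pos.2 (by positivity)
  have ha0 : a ≠ 0 := by
    intro h
    rw [h] at hi₀
    simp only [abs_zero] at hi₀
    have : (0:ℝ) < 1/Real.sqrt (m+1) := by positivity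
    linarith
  have hapos : 0 < |a| := abs_pos.2 ha0
  -- slice bound
  have hslice : ∀ b : ℝ, volume {t : ℝ | t ∈ Set.Ioo (-(2*π*R)) (2*π*R) ∧
      ‖Complex.exp (Complex.I * ((t*a+b : ℝ) : ℂ)) - 1‖ ≤ δ}
      ≤ ENNReal.ofReal (2*π*(1+Real.sqrt (m+1)) * R * δ) := by
    intro b
    refine (oneD ha0 hδ hL).trans (ENNReal.ofReal_le_ofReal ?_)
    have h1 : ((2*π*R)*|a|/π + 2) * (π*δ/|a|) = 2*π*R*δ + 2*π*δ/|a| := by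
      field_simp
    rw [h1]
    have h2 : 1/|a| ≤ Real.sqrt (m+1) := by
      rw [div_le_iff₀ hapos]
      rw [div_le_iff₀ hsm] at hi₀
      linarith
    have h3 : 2*π*δ/|a| ≤ 2*π*δ*Real.sqrt (m+1) := by
      rw [div_le_iff₀ hapos]
      have : (1:ℝ) ≤ |a| * Real.sqrt (m+1) := by
        rw [div_le_iff₀ hsm] at hi₀
        nlinarith
      nlinarith [mul_pos (mul_pos (mul_pos two_pos hπ) hδ) hapos]
    have h4 : 2*π*δ*Real.sqrt (m+1) ≤ 2*π*δ*Real.sqrt (m+1) * R := by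
      nlinarith [mul_pos (mul_pos (mul_pos two_pos hπ) hδ) hsm]
    nlinarith
  -- transfer to Pi space
  set cs : ℝ := 2*π*(1+Real.sqrt (m+1)) * R * δ with hcs
  set A_P : Set (Fin (m+1) → ℝ) := {x | (∀ i, x i ∈ Set.Ioo (-(2*π*R)) (2*π*R)) ∧
      ‖Complex.exp (Complex.I * ((∑ i, x i * ξ i : ℝ) : ℂ)) - 1‖ ≤ δ} with hAP
  have hcont : Continuous fun x : Fin (m+1) → ℝ =>
      ‖Complex.exp (Complex.I * ((∑ i, x i * ξ i : ℝ) : ℂ)) - 1‖ := by fun_prop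
  have hAPm : MeasurableSet A_P := by
    rw [hAP, Set.setOf_and]
    apply MeasurableSet.inter
    · rw [Set.setOf_forall]
      exact MeasurableSet.iInter fun i => measurable_pi_apply i measurableSet_Ioo
    · exact hcont.measurable measurableSet_Iic
  have hEP : volume {x : EuclideanSpace ℝ (Fin (m+1)) |
      (∀ i, x i ∈ Set.Ioo (-(2*π*R)) (2*π*R)) ∧
      ‖Complex.exp (Complex.I * ((⟪x, ξ⟫ : ℝ) : ℂ)) - 1‖ ≤ δ} = volume A_P := by
    rw [← (EuclideanSpace.volume_preserving_symm_measurableEquiv_toLp (Fin (m+1))).measure_preimage_equiv A_P]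
    congr 1
    ext x
    rw [hAP]
    simp [PiLp.inner_apply, mul_comm]
  rw [hEP]
  set e2 := MeasurableEquiv.piFinSuccAbove (fun _ : Fin (m+1) => ℝ) i₀ with he2
  have mp := measurePreserving_piFinSuccAbove (fun _ : Fin (m+1) => (volume : Measure ℝ)) i₀
  set S : Set (ℝ × (Fin m → ℝ)) := e2.symm ⁻¹' A_P with hSdef
  have hS : MeasurableSet S := e2.symm.measurable hAPm
  have hvol : volume A_P
      = ((volume : Measure ℝ).prod (Measure.pi fun _ : Fin m => (volume : Measure ℝ))) S := by
    rw [volume_pi]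
    exact ((MeasurePreserving.symm e2 mp).measure_preimage_equiv A_P).symm
  rw [hvol, Measure.prod_apply_symm hS]
  set cube : Set (Fin m → ℝ) := Set.univ.pi fun _ : Fin m => Set.Ioo (-(2*π*R)) (2*π*R) with hcube
  have hcubem : MeasurableSet cube := MeasurableSet.univ_pi fun _ => measurableSet_Ioo
  have hsl : ∀ y : Fin m → ℝ, volume ((fun t => (t,y)) ⁻¹' S)
      ≤ Set.indicator cube (fun _ => ENNReal.ofReal cs) y := by
    intro y
    by_cases hy : y ∈ cube
    · rw [Set.indicator_of_mem hy]
      refine le_trans (measure_mono ?_) (hslice (∑ j, y j * ξ (i₀.succAbove j)))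
      intro t ht
      have h1 : e2.symm (t, y) = Fin.insertNth (α := fun _ => ℝ) i₀ t y := rfl
      rw [Set.mem_preimage, hSdef, Set.mem_preimage, h1] at ht
      obtain ⟨hcu, hexp⟩ := ht
      constructor
      · have := hcu i₀
        rwa [Fin.insertNth_apply_same] at this
      · have hsum : ∑ i, (Fin.insertNth (α := fun _ => ℝ) i₀ t y) i * ξ i
            = t * a + ∑ j, y j * ξ (i₀.succAbove j) := by
          rw [Fin.sum_univ_succAbove (fun i => (Fin.insertNth (α := fun _ => ℝ) i₀ t y) i * ξ i) i₀]
          simp [Fin.insertNth_apply_same, Fin.insertNth_apply_succAbove, haa]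
        rw [hsum] at hexp
        exact hexp
    · rw [Set.indicator_of_notMem hy]
      have hempty : ((fun t : ℝ => (t,y)) ⁻¹' S) = ∅ := by
        ext t
        simp only [Set.mem_preimage, Set.mem_empty_iff_false, iff_false]
        intro ht
        rw [hSdef, Set.mem_preimage] at ht
        have h1 : e2.symm (t, y) = Fin.insertNth (α := fun _ => ℝ) i₀ t y := rfl
        rw [h1] at ht
        apply hy
        rw [hcube, Set.mem_pi]
        intro j _
        have := ht.1 (i₀.succAbove j)
        rwa [Fin.insertNth_apply_succAbove] at this
      rw [hempty, measure_empty]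
  calc ∫⁻ y, volume ((fun t => (t,y)) ⁻¹' S) ∂(Measure.pi fun _ : Fin m => (volume : Measure ℝ))
      ≤ ∫⁻ y, Set.indicator cube (fun _ => ENNReal.ofReal cs) y
          ∂(Measure.pi fun _ : Fin m => (volume : Measure ℝ)) := lintegral_mono hsl
    _ = ENNReal.ofReal cs * (Measure.pi fun _ : Fin m => (volume : Measure ℝ)) cube := by
        rw [lintegral_indicator hcubem, setLIntegral_const]
    _ ≤ ENNReal.ofReal ((2*π*(1+Real.sqrt (m+1)) * (4*π)^m) * R^(m+1) * δ) := by
        have hc : (Measure.pi fun _ : Fin m => (volume : Measure ℝ)) cube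
            = ENNReal.ofReal ((4*π*R)^m) := by
          rw [hcube, Measure.pi_pi]
          have : ∀ _j : Fin m, (volume : Measure ℝ) (Set.Ioo (-(2*π*R)) (2*π*R))
              = ENNReal.ofReal (4*π*R) := by
            intro j
            rw [Real.volume_Ioo]
            congr 1
            ring
          rw [Finset.prod_congr rfl (fun j _ => this j), Finset.prod_const,
            Finset.card_univ, Fintype.card_fin, ← ENNReal.ofReal_pow (by positivity)]
        rw [hc, ← ENNReal.ofReal_mul (by positivity)]
        apply ENNReal.ofReal_le_ofReal
        apply le_of_eq
        rw [hcs, mul_pow]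
        ring


/-- There is a constant `C > 0` depending only on `k` such that for every `R ≥ 1`, every
`ξ ∈ ℝ^k` with `‖ξ‖ ≥ 1` and every `δ > 0`, the Lebesgue measure of the set of tuples
`(λ₀, …, λ_k) ∈ ((−2πR, 2πR)^k)^{k+1}` with `|e^{i⟨λ_ℓ, ξ⟩} − 1| ≤ δ` for all `ℓ`
is at most `C·R^{k(k+1)}·δ^{k+1}`. -/
theorem stmt11 (k : ℕ) (hk : 1 ≤ k) :
    ∃ C > (0:ℝ), ∀ R : ℝ, 1 ≤ R → ∀ ξ : EuclideanSpace ℝ (Fin k), 1 ≤ ‖ξ‖ →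
      ∀ δ : ℝ, 0 < δ →
        volume {lam : Fin (k + 1) → EuclideanSpace ℝ (Fin k) |
            (∀ ℓ : Fin (k + 1), ∀ i : Fin k,
              lam ℓ i ∈ Set.Ioo (-(2 * π * R)) (2 * π * R)) ∧
            ∀ ℓ : Fin (k + 1),
              ‖Complex.exp (Complex.I * (⟪lam ℓ, ξ⟫ : ℝ)) - 1‖ ≤ δ}
          ≤ ENNReal.ofReal (C * R ^ (k * (k + 1)) * δ ^ (k + 1)) := by
  obtain ⟨m, rfl⟩ : ∃ m, k = m + 1 := ⟨k - 1, (Nat.succ_pred_eq_of_pos hk).symm⟩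
  have hπ := Real.pi_pos
  set C₀ : ℝ := 2*π*(1+Real.sqrt (m+1)) * (4*π)^m with hC₀
  have hC₀pos : 0 < C₀ := by
    have : (0:ℝ) < Real.sqrt (m+1) := Real.sqrt_pos.2 (by positivity)
    positivity
  refine ⟨C₀^(m+2), pow_pos hC₀pos _, ?_⟩
  intro R hR ξ hξ δ hδ
  set A : Set (EuclideanSpace ℝ (Fin (m+1))) := {x : EuclideanSpace ℝ (Fin (m+1)) |
      (∀ i, x i ∈ Set.Ioo (-(2*π*R)) (2*π*R)) ∧
      ‖Complex.exp (Complex.I * ((⟪x, ξ⟫ : ℝ) : ℂ)) - 1‖ ≤ δ} with hA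
  have hset : {lam : Fin (m + 1 + 1) → EuclideanSpace ℝ (Fin (m+1)) |
      (∀ ℓ : Fin (m + 1 + 1), ∀ i : Fin (m+1),
        lam ℓ i ∈ Set.Ioo (-(2 * π * R)) (2 * π * R)) ∧
      ∀ ℓ : Fin (m + 1 + 1),
        ‖Complex.exp (Complex.I * (⟪lam ℓ, ξ⟫ : ℝ)) - 1‖ ≤ δ}
      = Set.pi Set.univ (fun _ : Fin (m+1+1) => A) := by
    ext lam
    simp only [Set.mem_setOf_eq, Set.mem_pi, Set.mem_univ, forall_const, hA]
    constructor
    · rintro ⟨h1, h2⟩ ℓ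
      exact ⟨h1 ℓ, h2 ℓ⟩
    · intro h
      exact ⟨fun ℓ => (h ℓ).1, fun ℓ => (h ℓ).2⟩
  rw [hset, volume_pi_pi, Finset.prod_const, Finset.card_univ, Fintype.card_fin]
  have hbound := dimk hR hδ ξ hξ
  rw [← hA] at hbound
  calc volume A ^ (m + 1 + 1)
      ≤ (ENNReal.ofReal (C₀ * R^(m+1) * δ)) ^ (m + 1 + 1) := pow_le_pow_left₀ (by positivity) hbound _
    _ = ENNReal.ofReal ((C₀ * R^(m+1) * δ) ^ (m + 1 + 1)) := by
        rw [← ENNReal.ofReal_pow (by positivity)]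
    _ ≤ ENNReal.ofReal (C₀^(m+2) * R ^ ((m+1) * (m + 1 + 1)) * δ ^ (m + 1 + 1)) := by
        apply ENNReal.ofReal_le_ofReal
        apply le_of_eq
        rw [mul_pow, mul_pow, pow_mul]
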